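/- arXiv:2312.11807 — 2 statements merged into one kernel-verified Lean document; each statement's English description precedes it below -/
import Mathlib

section
/- Under the stated setting, the generalized binomial edge ideal of the complete r-partite graph G admits the decomposition J_{K_m,G} = J_{K_m,G̃} ∩ A_s ∩ A_{s+1} ∩ ⋯ ∩ A_r, where G̃ is the complete graph on [n]; moreover each of the ideals J_{K_m,G̃}, A_s, …, A_r is prime, so this is the minimal primary decomposition of J_{K_m,G}. -/
/-!
Setting: `ν : Fin r → ℕ` gives the sizes `n_1, …, n_r` of the parts of a complete
`r`-partite graph `G = K_{n_1,…,n_r}` on vertex set `Fin n`, `n = Σ ν i`.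
The part `V_k` consists of the vertices `j` with `partStart ν k ≤ j < partStart ν k + ν k`.
`Jpartite K m r n ν` is the generalized binomial edge ideal `J_{K_m,G}`,
`Jcomplete K m n` that of the complete graph `G̃ = K_n`, and `Aideal K m r n ν k`
is the ideal `A_k` generated by the variables `x_{uj}` with `j ∈ T_k = ⋃_{i ≠ k} V_i`.
-/

open MvPolynomial

/-- The first vertex (as a natural number) of the `k`-th part, i.e. `Σ_{i<k} ν i`. -/
def partStart {r : ℕ} (ν : Fin r → ℕ) (k : Fin r) : ℕ := ∑ i ∈ Finset.Iio k, ν i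

/-- The natural number `j` is a vertex lying in the `k`-th part `V_k`. -/
def inPart {r : ℕ} (ν : Fin r → ℕ) (k : Fin r) (j : ℕ) : Prop :=
  partStart ν k ≤ j ∧ j < partStart ν k + ν k

/-- Vertices `u`, `v` lie in different parts (no part contains both), i.e. `{u,v}`
is an edge of the complete multipartite graph. -/
def crossPair {r : ℕ} (ν : Fin r → ℕ) (u v : ℕ) : Prop :=
  ∀ k : Fin r, ¬ (inPart ν k u ∧ inPart ν k v)

/-- The generalized binomial edge ideal `J_{K_m,G}` of the complete multipartite graph
`G = K_{n_1,…,n_r}`, generated by the `2`-minors `x_{ik}x_{jl} - x_{il}x_{jk}`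
for `i < j` in `[m]` and edges `{k,l}` (`k < l`) of `G`. -/
noncomputable def Jpartite (K : Type) [Field K] (m r n : ℕ) (ν : Fin r → ℕ) :
    Ideal (MvPolynomial (Fin m × Fin n) K) :=
  Ideal.span {p | ∃ (i j : Fin m) (k l : Fin n), i < j ∧ k < l ∧ crossPair ν k l ∧
    p = X (i, k) * X (j, l) - X (i, l) * X (j, k)}

/-- The generalized binomial edge ideal `J_{K_m,G̃}` of the complete graph `G̃ = K_n`,
i.e. the ideal of all `2× 2` minors of the generic `m × n` matrix `(x_{ij})`. -/
noncomputable def Jcomplete (K : Type) [Field K] (m n : ℕ) : Ideal (MvPolynomial (Fin m × Fin n) K) :=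
  Ideal.span {p | ∃ (i j : Fin m) (k l : Fin n), i < j ∧ k < l ∧
    p = X (i, k) * X (j, l) - X (i, l) * X (j, k)}

/-- The prime ideal `A_k = (x_{uj} : u ∈ [m], j ∈ T_k)`, `T_k = ⋃_{i ≠ k} V_i` (for `ν k ≥ 2`). -/
noncomputable def Aideal (K : Type) [Field K] (m r n : ℕ) (ν : Fin r → ℕ) (k : Fin r) :
    Ideal (MvPolynomial (Fin m × Fin n) K) :=
  Ideal.span {p | ∃ (u : Fin m) (j : Fin n), ¬ inPart ν k (j : ℕ) ∧ p = X (u, j)}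

namespace Stmt0Aux
open Finsupp
variable (K : Type) [Field K] {m n : ℕ}

noncomputable def mnr (i j : Fin m) (k l : Fin n) : MvPolynomial (Fin m × Fin n) K :=
  X (i, k) * X (j, l) - X (i, l) * X (j, k)

lemma mnr_mem_complete (i j : Fin m) (k l : Fin n) : mnr K i j k l ∈ Jcomplete K m n := by
  have gen : ∀ (i j : Fin m) (k l : Fin n), i < j → k < l →
      mnr K i j k l ∈ Jcomplete K m n := fun i j k l hij hkl =>
    Ideal.subset_span ⟨i, j, k, l, hij, hkl, rfl⟩
  have hrow : ∀ (i j : Fin m) (k l : Fin n), i < j →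
      mnr K i j k l ∈ Jcomplete K m n := by
    intro i j k l hij
    rcases lt_trichotomy k l with h | h | h
    · exact gen _ _ _ _ hij h
    · simp [mnr, h]
    · have : mnr K i j k l = - mnr K i j l k := by rw [mnr, mnr]; ring
      rw [this]; exact neg_mem (gen _ _ _ _ hij h)
  rcases lt_trichotomy i j with h | h | h
  · exact hrow _ _ _ _ h
  · simp [mnr, h, mul_comm]
  · have : mnr K i j k l = - mnr K j i k l := by rw [mnr, mnr]; ring
    rw [this]; exact neg_mem (hrow _ _ _ _ h)

/-! ### The Segre homomorphism -/

noncomputable def segre : MvPolynomial (Fin m × Fin n) K →ₐ[K] MvPolynomial (Fin m ⊕ Fin n) K :=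
  aeval (fun p : Fin m × Fin n => X (Sum.inl p.1) * X (Sum.inr p.2))

/-- exponent vector of the image of a monomial under the Segre map. -/
noncomputable def emb (A : Fin m × Fin n →₀ ℕ) : Fin m ⊕ Fin n →₀ ℕ :=
  mapDomain (fun p : Fin m × Fin n => Sum.inl p.1) A +
    mapDomain (fun p : Fin m × Fin n => Sum.inr p.2) A

variable {K}

lemma emb_add (A B : Fin m × Fin n →₀ ℕ) : emb (A + B) = emb A + emb B := by
  simp only [emb, mapDomain_add]; abel

lemma emb_single (p : Fin m × Fin n) (e : ℕ) :
    emb (single p e) = single (Sum.inl p.1) e + single (Sum.inr p.2) e := by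
  simp [emb, mapDomain_single]

lemma emb_inl (A : Fin m × Fin n →₀ ℕ) (i : Fin m) :
    emb A (Sum.inl i) = mapDomain Prod.fst A i := by
  have h1 : (mapDomain (fun p : Fin m × Fin n => Sum.inr p.2) A) (Sum.inl i) = 0 := by
    apply mapDomain_notin_range
    rintro ⟨a, ha⟩; simp at ha
  have h2 : (fun p : Fin m × Fin n => (Sum.inl p.1 : Fin m ⊕ Fin n)) =
      (Sum.inl ∘ Prod.fst : Fin m × Fin n → Fin m ⊕ Fin n) := rfl
  rw [emb, Finsupp.add_apply, h1, add_zero, h2, mapDomain_comp,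
    mapDomain_apply Sum.inl_injective]

lemma emb_inr (A : Fin m × Fin n →₀ ℕ) (j : Fin n) :
    emb A (Sum.inr j) = mapDomain Prod.snd A j := by
  have h1 : (mapDomain (fun p : Fin m × Fin n => Sum.inl p.1) A) (Sum.inr j) = 0 := by
    apply mapDomain_notin_range
    rintro ⟨a, ha⟩; simp at ha
  have h2 : (fun p : Fin m × Fin n => (Sum.inr p.2 : Fin m ⊕ Fin n)) =
      (Sum.inr ∘ Prod.snd : Fin m × Fin n → Fin m ⊕ Fin n) := rfl
  rw [emb, Finsupp.add_apply, h1, zero_add, h2, mapDomain_comp,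
    mapDomain_apply Sum.inr_injective]

lemma emb_eq_iff {A B : Fin m × Fin n →₀ ℕ} (h : emb A = emb B) :
    mapDomain Prod.fst A = mapDomain Prod.fst B ∧
      mapDomain Prod.snd A = mapDomain Prod.snd B := by
  constructor
  · ext i; rw [← emb_inl, ← emb_inl, h]
  · ext j; rw [← emb_inr, ← emb_inr, h]

lemma segre_monomial (A : Fin m × Fin n →₀ ℕ) (c : K) :
    segre K (monomial A c) = monomial (emb A) c := by
  induction A using Finsupp.induction with
  | zero => simp [emb, segre, monomial_zero', aeval_C, algebraMap_eq]
  | single_add p e A hp he ih =>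
    have hmono : (monomial (single p e + A) c : MvPolynomial (Fin m × Fin n) K) =
        monomial (single p e) 1 * monomial A c := by
      rw [monomial_mul, one_mul]
    have hXe : (monomial (single p e) 1 : MvPolynomial (Fin m × Fin n) K) = X p ^ e :=
      X_pow_eq_monomial.symm
    have hseg1 : segre K (monomial (single p e) 1 : MvPolynomial (Fin m × Fin n) K)
        = monomial (emb (single p e)) 1 := by
      rw [hXe, map_pow]
      have : segre K (X p : MvPolynomial (Fin m × Fin n) K)
          = X (Sum.inl p.1) * X (Sum.inr p.2) := by simp [segre]
      rw [this, mul_pow, X_pow_eq_monomial, X_pow_eq_monomial, monomial_mul, one_mul,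
        emb_single]
    rw [hmono, map_mul, ih, hseg1, monomial_mul, one_mul, emb_add]

/-! ### mass of an exponent vector -/

def mass (A : Fin m × Fin n →₀ ℕ) : ℕ := A.sum fun _ c => c

lemma mass_add (A B : Fin m × Fin n →₀ ℕ) : mass (A + B) = mass A + mass B := by
  simp [mass, Finsupp.sum_add_index']

lemma mass_single (p : Fin m × Fin n) (e : ℕ) : mass (single p e) = e := by
  simp [mass, Finsupp.sum_single_index]

lemma mass_eq_zero {A : Fin m × Fin n →₀ ℕ} (h : mass A = 0) : A = 0 := by
  ext p
  by_contra hp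
  have hps : p ∈ A.support := Finsupp.mem_support_iff.2 hp
  have := Finset.sum_eq_zero_iff.1 h p hps
  exact hp this

lemma mass_mapDomain {α : Type*} (f : Fin m × Fin n → α) (A : Fin m × Fin n →₀ ℕ) :
    (mapDomain f A).sum (fun _ c => c) = mass A := by
  exact Finsupp.sum_mapDomain_index (fun _ => rfl) (fun _ _ _ => rfl)

lemma mapDomain_apply_eq_sum {α : Type*} [DecidableEq α] (f : Fin m × Fin n → α)
    (A : Fin m × Fin n →₀ ℕ) (b : α) :
    (mapDomain f A) b = ∑ a ∈ A.support, if f a = b then A a else 0 := by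
  rw [mapDomain, Finsupp.sum, Finsupp.finset_sum_apply]
  exact Finset.sum_congr rfl fun a _ => Finsupp.single_apply

lemma pos_of_mapDomain {α : Type*} (f : Fin m × Fin n → α)
    (A : Fin m × Fin n →₀ ℕ) (p : Fin m × Fin n) (hp : A p ≠ 0) :
    (mapDomain f A) (f p) ≠ 0 := by
  classical
  rw [mapDomain_apply_eq_sum]
  intro h
  have hps : p ∈ A.support := Finsupp.mem_support_iff.2 hp
  have := Finset.sum_eq_zero_iff.1 h p hps
  simp at this
  exact hp this

lemma exists_of_mapDomain {α : Type*} (f : Fin m × Fin n → α)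
    (A : Fin m × Fin n →₀ ℕ) (b : α) (hb : (mapDomain f A) b ≠ 0) :
    ∃ p, f p = b ∧ A p ≠ 0 := by
  classical
  rw [mapDomain_apply_eq_sum] at hb
  by_contra hcon
  push_neg at hcon
  apply hb
  apply Finset.sum_eq_zero
  intro a ha
  split_ifs with hfa
  · exact hcon a hfa
  · rfl

variable (K)

/-- The swap-connectivity lemma: two monomials with the same row sums and the same
column sums are congruent modulo the ideal of 2-minors. -/
lemma monomial_sub_mem (N : ℕ) : ∀ (A B : Fin m × Fin n →₀ ℕ), mass A = N →
    mapDomain Prod.fst A = mapDomain Prod.fst B →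
    mapDomain Prod.snd A = mapDomain Prod.snd B →
    (monomial A 1 - monomial B 1 : MvPolynomial (Fin m × Fin n) K) ∈ Jcomplete K m n := by
  induction N using Nat.strong_induction_on with
  | _ N IH =>
  -- first, the common-point reduction
  have step_common : ∀ (A B : Fin m × Fin n →₀ ℕ), mass A = N →
      mapDomain Prod.fst A = mapDomain Prod.fst B →
      mapDomain Prod.snd A = mapDomain Prod.snd B →
      ∀ p, A p ≠ 0 → B p ≠ 0 →
      (monomial A 1 - monomial B 1 : MvPolynomial (Fin m × Fin n) K) ∈ Jcomplete K m n := by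
    intro A B hmass hrow hcol p hA hB
    set A' := A - single p 1 with hA'def
    set B' := B - single p 1 with hB'def
    have hAeq : A' + single p 1 = A :=
      tsub_add_cancel_of_le (Finsupp.single_le_iff.2 (Nat.one_le_iff_ne_zero.2 hA))
    have hBeq : B' + single p 1 = B :=
      tsub_add_cancel_of_le (Finsupp.single_le_iff.2 (Nat.one_le_iff_ne_zero.2 hB))
    have hrow' : mapDomain Prod.fst A' = mapDomain Prod.fst B' := by
      have h1 : mapDomain Prod.fst A' + mapDomain Prod.fst (single p 1)
          = mapDomain Prod.fst B' + mapDomain Prod.fst (single p 1) := by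
        rw [← mapDomain_add, ← mapDomain_add, hAeq, hBeq, hrow]
      exact add_right_cancel h1
    have hcol' : mapDomain Prod.snd A' = mapDomain Prod.snd B' := by
      have h1 : mapDomain Prod.snd A' + mapDomain Prod.snd (single p 1)
          = mapDomain Prod.snd B' + mapDomain Prod.snd (single p 1) := by
        rw [← mapDomain_add, ← mapDomain_add, hAeq, hBeq, hcol]
      exact add_right_cancel h1
    have hmass' : mass A' + 1 = N := by
      rw [← hmass, ← hAeq, mass_add, mass_single]
    have hlt : mass A' < N := by omega
    have hmem := IH (mass A') hlt A' B' rfl hrow' hcol'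
    have hfactor : (monomial A 1 - monomial B 1 : MvPolynomial (Fin m × Fin n) K)
        = X p * (monomial A' 1 - monomial B' 1) := by
      rw [mul_sub]
      have hXp : (X p : MvPolynomial (Fin m × Fin n) K) = monomial (single p 1) 1 := rfl
      rw [hXp, monomial_mul, monomial_mul, one_mul]
      rw [add_comm] at hAeq hBeq
      rw [hAeq, hBeq]
    rw [hfactor]
    exact Ideal.mul_mem_left _ _ hmem
  intro A B hmass hrow hcol
  by_cases hAB : A = B
  · rw [hAB, sub_self]; exact zero_mem _
  by_cases hcommon : ∃ p, A p ≠ 0 ∧ B p ≠ 0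
  · obtain ⟨p, hA, hB⟩ := hcommon
    exact step_common A B hmass hrow hcol p hA hB
  · push_neg at hcommon
    -- A ≠ 0
    have hA0 : A ≠ 0 := by
      intro h
      apply hAB
      rw [h] at hrow ⊢
      have : mass B = 0 := by
        have := mass_mapDomain (Prod.fst) B
        rw [← hrow] at this
        simpa [mass] using this.symm
      exact (mass_eq_zero this).symm
    obtain ⟨⟨i, k⟩, hik⟩ : ∃ p, A p ≠ 0 := by
      by_contra hc; push_neg at hc; exact hA0 (Finsupp.ext fun p => hc p)
    have hBik : B (i, k) = 0 := hcommon _ hik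
    -- find l with B (i,l) ≠ 0
    have hrowBi : mapDomain Prod.fst B i ≠ 0 := by
      rw [← hrow]; exact pos_of_mapDomain Prod.fst A (i,k) hik
    obtain ⟨q1, hfst, hBq1⟩ := exists_of_mapDomain Prod.fst B i hrowBi
    set l := q1.2 with hldef
    have hq1 : (i, l) = q1 := by rw [hldef, ← hfst]
    have hBil : B (i, l) ≠ 0 := by rw [hq1]; exact hBq1
    have hlk : l ≠ k := fun h => hBil (by rw [h]; exact hBik)
    -- find j with B (j,k) ≠ 0
    have hcolBk : mapDomain Prod.snd B k ≠ 0 := by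
      rw [← hcol]; exact pos_of_mapDomain Prod.snd A (i,k) hik
    obtain ⟨q2, hsnd, hBq2⟩ := exists_of_mapDomain Prod.snd B k hcolBk
    set j := q2.1 with hjdef
    have hq2 : (j, k) = q2 := by rw [hjdef, ← hsnd]
    have hBjk : B (j, k) ≠ 0 := by rw [hq2]; exact hBq2
    have hji : j ≠ i := fun h => hBjk (by rw [h]; exact hBik)
    -- decompose B
    set B1 := B - single (i, l) 1 with hB1def
    have hB1 : B1 + single (i, l) 1 = B :=
      tsub_add_cancel_of_le (Finsupp.single_le_iff.2 (Nat.one_le_iff_ne_zero.2 hBil))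
    have hB1jk : B1 (j, k) ≠ 0 := by
      have heq : B1 (j, k) = B (j, k) := by
        rw [hB1def, Finsupp.tsub_apply, Finsupp.single_apply]
        split_ifs with h
        · exact absurd (congrArg Prod.fst h).symm hji
        · simp
      rw [heq]; exact hBjk
    set C := B1 - single (j, k) 1 with hCdef
    have hC : C + single (j, k) 1 = B1 :=
      tsub_add_cancel_of_le (Finsupp.single_le_iff.2 (Nat.one_le_iff_ne_zero.2 hB1jk))
    set B' := C + single (i, k) 1 + single (j, l) 1 with hB'def
    -- B' has same row and column sums as B
    have hrowB' : mapDomain Prod.fst B' = mapDomain Prod.fst B := by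
      rw [hB'def, ← hB1, ← hC]
      simp only [mapDomain_add, mapDomain_single]
      abel
    have hcolB' : mapDomain Prod.snd B' = mapDomain Prod.snd B := by
      rw [hB'def, ← hB1, ← hC]
      simp only [mapDomain_add, mapDomain_single]
    -- X^B - X^B' is a multiple of a minor
    have hswap : (monomial B 1 - monomial B' 1 : MvPolynomial (Fin m × Fin n) K)
        = monomial C 1 * (-(mnr K i j k l)) := by
      have hBe : B = C + single (j, k) 1 + single (i, l) 1 := by
        rw [hC, hB1]
      rw [hBe, hB'def]
      have e1 : ∀ (a b : Fin m × Fin n),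
          (monomial (C + single a 1 + single b 1) (1:K) : MvPolynomial (Fin m × Fin n) K)
          = monomial C 1 * X a * X b := by
        intro a b
        have hXa : (X a : MvPolynomial (Fin m × Fin n) K) = monomial (single a 1) 1 := rfl
        have hXb : (X b : MvPolynomial (Fin m × Fin n) K) = monomial (single b 1) 1 := rfl
        rw [hXa, hXb, monomial_mul, monomial_mul]; simp
      rw [e1, e1, mnr]; ring
    have hswapmem : (monomial B 1 - monomial B' 1 : MvPolynomial (Fin m × Fin n) K)
        ∈ Jcomplete K m n := by
      rw [hswap]
      exact Ideal.mul_mem_left _ _ (neg_mem (mnr_mem_complete K i j k l))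
    -- A and B' share the point (i,k)
    have hB'ik : B' (i, k) ≠ 0 := by
      rw [hB'def]
      simp only [Finsupp.add_apply, Finsupp.single_apply]
      split_ifs <;> omega
    have hmem2 := step_common A B' hmass (hrow.trans hrowB'.symm) (hcol.trans hcolB'.symm)
      (i, k) hik hB'ik
    have : (monomial A 1 - monomial B 1 : MvPolynomial (Fin m × Fin n) K)
        = (monomial A 1 - monomial B' 1) - (monomial B 1 - monomial B' 1) := by ring
    rw [this]
    exact sub_mem hmem2 hswapmem


lemma segre_Jcomplete : Jcomplete K m n ≤ RingHom.ker (segre K).toRingHom := by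
  rw [Jcomplete, Ideal.span_le]
  rintro p ⟨i, j, k, l, hij, hkl, rfl⟩
  simp only [SetLike.mem_coe, RingHom.mem_ker, AlgHom.toRingHom_eq_coe, RingHom.coe_coe]
  simp only [map_sub, map_mul, segre, aeval_X]
  ring

lemma ker_le_complete (q : MvPolynomial (Fin m × Fin n) K) (h0 : segre K q = 0) :
    q ∈ Jcomplete K m n := by
  classical
  suffices H : ∀ c (q : MvPolynomial (Fin m × Fin n) K), q.support.card = c →
      segre K q = 0 → q ∈ Jcomplete K m n from H _ q rfl h0
  clear h0 q
  intro c
  induction c using Nat.strong_induction_on with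
  | _ c IH =>
  intro q hcard h0
  by_cases hq : q = 0
  · simp [hq]
  obtain ⟨A, hA⟩ : q.support.Nonempty :=
    Finset.nonempty_of_ne_empty (fun h => hq (MvPolynomial.support_eq_empty.1 h))
  set T := q.support.filter (fun B => emb B = emb A) with hT
  have hTsub : T ⊆ q.support := Finset.filter_subset _ _
  have hAT : A ∈ T := Finset.mem_filter.2 ⟨hA, rfl⟩
  -- the sum of the coefficients in the class of A vanishes
  have hsq : segre K q = ∑ B ∈ q.support, monomial (emb B) (coeff B q) := by
    conv_lhs => rw [q.as_sum]
    rw [map_sum]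
    exact Finset.sum_congr rfl fun B _ => segre_monomial _ _
  have key : ∑ B ∈ T, coeff B q = 0 := by
    have h1 : coeff (emb A) (segre K q) = ∑ B ∈ T, coeff B q := by
      rw [hsq, coeff_sum, hT, Finset.sum_filter]
      exact Finset.sum_congr rfl fun B _ => coeff_monomial _ _ _
    rw [h0, coeff_zero] at h1
    exact h1.symm
  set g : MvPolynomial (Fin m × Fin n) K := ∑ B ∈ T, monomial B (coeff B q) with hg
  have hrep : ∑ B ∈ T, (coeff B q) • (monomial B 1 - monomial A 1) = g := by
    have h2 : ∀ B ∈ T, (coeff B q) • ((monomial B 1 : MvPolynomial (Fin m × Fin n) K)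
        - monomial A 1) = monomial B (coeff B q) - (coeff B q) • monomial A 1 := by
      intro B _
      rw [smul_sub, smul_monomial, smul_eq_mul, mul_one]
    rw [Finset.sum_congr rfl h2, Finset.sum_sub_distrib, ← Finset.sum_smul, key, zero_smul,
      sub_zero]
  have hgJ : g ∈ Jcomplete K m n := by
    rw [← hrep]
    refine Submodule.sum_mem _ fun B hB => ?_
    have hBA : emb B = emb A := (Finset.mem_filter.1 hB).2
    obtain ⟨hr, hc⟩ := emb_eq_iff hBA
    rw [smul_eq_C_mul]
    exact Ideal.mul_mem_left _ _ (monomial_sub_mem K (mass B) B A rfl hr hc)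
  set q' := q - g with hq'
  have h0' : segre K q' = 0 := by
    have := segre_Jcomplete (K := K) (m := m) (n := n) hgJ
    simp only [RingHom.mem_ker, AlgHom.toRingHom_eq_coe, RingHom.coe_coe] at this
    rw [hq', map_sub, h0, this, sub_zero]
  have hcoeffg : ∀ B, coeff B g = if B ∈ T then coeff B q else 0 := by
    intro B
    rw [hg, coeff_sum]
    rw [Finset.sum_congr rfl (fun B' _ => coeff_monomial _ _ _), Finset.sum_ite_eq']
  have hsupp : q'.support ⊆ q.support \ T := by
    intro B hB
    rw [MvPolynomial.mem_support_iff] at hB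
    rw [hq', coeff_sub, hcoeffg] at hB
    by_cases hBT : B ∈ T
    · rw [if_pos hBT, sub_self] at hB; exact absurd rfl hB
    · rw [if_neg hBT, sub_zero] at hB
      exact Finset.mem_sdiff.2 ⟨MvPolynomial.mem_support_iff.2 hB, hBT⟩
  have hcard' : q'.support.card < c := by
    have h3 : q.support \ T ⊂ q.support := by
      refine Finset.sdiff_ssubset ?_ ⟨A, hAT⟩
      exact hTsub
    calc q'.support.card ≤ (q.support \ T).card := Finset.card_le_card hsupp
    _ < q.support.card := Finset.card_lt_card h3
    _ = c := hcard
  have hq'J : q' ∈ Jcomplete K m n := IH _ hcard' q' rfl h0'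
  have : q = q' + g := by rw [hq']; ring
  rw [this]
  exact add_mem hq'J hgJ

lemma Jcomplete_eq_ker : Jcomplete K m n = RingHom.ker (segre K).toRingHom := by
  refine le_antisymm (segre_Jcomplete K) fun q hq => ?_
  simp only [RingHom.mem_ker, AlgHom.toRingHom_eq_coe, RingHom.coe_coe] at hq
  exact ker_le_complete K q hq

lemma Jcomplete_isPrime : (Jcomplete K m n).IsPrime := by
  rw [Jcomplete_eq_ker]
  exact RingHom.ker_isPrime _


/-! ### Part geometry -/

section Parts
variable {K} {r : ℕ} (ν : Fin r → ℕ)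

lemma partStart_add_le {t w : Fin r} (h : t < w) :
    partStart ν t + ν t ≤ partStart ν w := by
  have h1 : Finset.Iic t ⊆ Finset.Iio w := fun x hx =>
    Finset.mem_Iio.2 (lt_of_le_of_lt (Finset.mem_Iic.1 hx) h)
  have h2 : ∑ i ∈ Finset.Iic t, ν i ≤ ∑ i ∈ Finset.Iio w, ν i :=
    Finset.sum_le_sum_of_subset h1
  have h3 : ∑ i ∈ Finset.Iic t, ν i = ν t + ∑ i ∈ Finset.Iio t, ν i := by
    rw [← Finset.Iio_insert, Finset.sum_insert (by simp)]
  rw [partStart, partStart]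
  omega

lemma parts_disjoint {t w : Fin r} (h : t ≠ w) (j : ℕ) :
    ¬(inPart ν t j ∧ inPart ν w j) := by
  rintro ⟨⟨h1, h2⟩, ⟨h3, h4⟩⟩
  rcases h.lt_or_gt with hlt | hlt
  · have := partStart_add_le ν hlt; omega
  · have := partStart_add_le ν hlt; omega

lemma cross_of (t : Fin r) {j k : ℕ} (hj : ¬ inPart ν t j) (hk : inPart ν t k) :
    crossPair ν j k := by
  intro w hw
  rcases eq_or_ne w t with rfl | hne
  · exact hj hw.1
  · exact parts_disjoint ν hne k ⟨hw.2, hk⟩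

lemma crossPair_symm {j k : ℕ} (h : crossPair ν j k) : crossPair ν k j :=
  fun w hw => h w ⟨hw.2, hw.1⟩

end Parts

section Partite
variable {K} {r : ℕ} (ν : Fin r → ℕ)

lemma mnr_mem_partite (i j : Fin m) (k l : Fin n)
    (hcp : crossPair ν (k : ℕ) (l : ℕ)) : mnr K i j k l ∈ Jpartite K m r n ν := by
  have gen : ∀ (i j : Fin m) (k l : Fin n), i < j → k < l → crossPair ν (k : ℕ) (l : ℕ) →
      mnr K i j k l ∈ Jpartite K m r n ν := fun i j k l hij hkl hc =>
    Ideal.subset_span ⟨i, j, k, l, hij, hkl, hc, rfl⟩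
  have hrow : ∀ (i j : Fin m) (k l : Fin n), i < j → crossPair ν (k : ℕ) (l : ℕ) →
      mnr K i j k l ∈ Jpartite K m r n ν := by
    intro i j k l hij hc
    rcases lt_trichotomy k l with h | h | h
    · exact gen _ _ _ _ hij h hc
    · simp [mnr, h]
    · have : mnr K i j k l = - mnr K i j l k := by rw [mnr, mnr]; ring
      rw [this]; exact neg_mem (gen _ _ _ _ hij h (crossPair_symm ν hc))
  rcases lt_trichotomy i j with h | h | h
  · exact hrow _ _ _ _ h hcp
  · simp [mnr, h, mul_comm]
  · have : mnr K i j k l = - mnr K j i k l := by rw [mnr, mnr]; ring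
    rw [this]; exact neg_mem (hrow _ _ _ _ h hcp)

/-- The key Plücker-type identity argument. -/
lemma keyJ (t : Fin r) (u : Fin m) (j : Fin n) (hj : ¬ inPart ν t (j : ℕ))
    (i i' : Fin m) (k l : Fin n) (hk : inPart ν t (k : ℕ)) (hl : inPart ν t (l : ℕ)) :
    X (u, j) * mnr K i i' k l ∈ Jpartite K m r n ν := by
  have hid : X (u, j) * mnr K i i' k l =
      X (i, k) * mnr K u i' j l - X (i', k) * mnr K u i j l - X (u, l) * mnr K i i' j k := by
    rw [mnr, mnr, mnr, mnr]; ring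
  rw [hid]
  have hjl : crossPair ν (j : ℕ) (l : ℕ) := cross_of ν t hj hl
  have hjk : crossPair ν (j : ℕ) (k : ℕ) := cross_of ν t hj hk
  exact sub_mem (sub_mem (Ideal.mul_mem_left _ _ (mnr_mem_partite ν u i' j l hjl))
    (Ideal.mul_mem_left _ _ (mnr_mem_partite ν u i j l hjl)))
    (Ideal.mul_mem_left _ _ (mnr_mem_partite ν i i' j k hjk))

/-! ### The evaluation map associated to a part -/

open Classical in
/-- Kills all variables whose column is outside `V_t`. -/
noncomputable def rho (t : Fin r) :
    MvPolynomial (Fin m × Fin n) K →ₐ[K] MvPolynomial (Fin m × Fin n) K :=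
  aeval (fun p : Fin m × Fin n => if inPart ν t (p.2 : ℕ) then X p else 0)

lemma rho_X_in (t : Fin r) (p : Fin m × Fin n) (h : inPart ν t (p.2 : ℕ)) :
    rho ν t (X p : MvPolynomial (Fin m × Fin n) K) = X p := by
  rw [rho, aeval_X, if_pos h]

lemma rho_X_out (t : Fin r) (p : Fin m × Fin n) (h : ¬ inPart ν t (p.2 : ℕ)) :
    rho ν t (X p : MvPolynomial (Fin m × Fin n) K) = 0 := by
  rw [rho, aeval_X, if_neg h]

lemma X_mem_Aideal (t : Fin r) (p : Fin m × Fin n) (h : ¬ inPart ν t (p.2 : ℕ)) :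
    (X p : MvPolynomial (Fin m × Fin n) K) ∈ Aideal K m r n ν t :=
  Ideal.subset_span ⟨p.1, p.2, h, by rw [Prod.mk.eta]⟩

lemma sub_rho_mem (t : Fin r) (p : MvPolynomial (Fin m × Fin n) K) :
    p - rho ν t p ∈ Aideal K m r n ν t := by
  induction p using MvPolynomial.induction_on with
  | C a => rw [show (rho ν t) (C a) = C a from aeval_C _ _, sub_self]; exact zero_mem _
  | add p q hp hq =>
    rw [map_add]
    have : p + q - (rho ν t p + rho ν t q) = (p - rho ν t p) + (q - rho ν t q) := by ring
    rw [this]; exact add_mem hp hq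
  | mul_X p v hp =>
    rw [map_mul]
    by_cases hv : inPart ν t (v.2 : ℕ)
    · rw [rho_X_in ν t v hv]
      have : p * X v - rho ν t p * X v = (p - rho ν t p) * X v := by ring
      rw [this]; exact Ideal.mul_mem_right _ _ hp
    · rw [rho_X_out ν t v hv, mul_zero, sub_zero]
      exact Ideal.mul_mem_left _ _ (X_mem_Aideal ν t v hv)

lemma Aideal_eq_ker (t : Fin r) :
    Aideal K m r n ν t = RingHom.ker (rho ν t (K := K)).toRingHom := by
  refine le_antisymm ?_ ?_
  · rw [Aideal, Ideal.span_le]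
    rintro p ⟨u, j, hj, rfl⟩
    simp only [SetLike.mem_coe, RingHom.mem_ker, AlgHom.toRingHom_eq_coe, RingHom.coe_coe]
    exact rho_X_out ν t (u, j) hj
  · intro p hp
    simp only [RingHom.mem_ker, AlgHom.toRingHom_eq_coe, RingHom.coe_coe] at hp
    have := sub_rho_mem ν t p
    rwa [hp, sub_zero] at this

lemma Aideal_isPrime (t : Fin r) : (Aideal K m r n ν t).IsPrime := by
  rw [Aideal_eq_ker]
  exact RingHom.ker_isPrime _

/-! ### The ideals `Q_t` -/

/-- The ideal generated by the 2-minors with both columns in part `V_t`. -/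
noncomputable def Qid (t : Fin r) : Ideal (MvPolynomial (Fin m × Fin n) K) :=
  Ideal.span {p | ∃ (i j : Fin m) (k l : Fin n), i < j ∧ k < l ∧
    inPart ν t (k : ℕ) ∧ inPart ν t (l : ℕ) ∧ p = mnr K i j k l}

lemma AQ_le_partite (t : Fin r) :
    Aideal K m r n ν t * Qid ν t ≤ Jpartite K m r n ν := by
  rw [Aideal, Qid, Ideal.span_mul_span', Ideal.span_le]
  rintro x hx
  obtain ⟨a, ha, b, hb, rfl⟩ := Set.mem_mul.1 hx
  obtain ⟨u, j, hj, rfl⟩ := ha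
  obtain ⟨i, i', k, l, _, _, hk, hl, rfl⟩ := hb
  exact keyJ ν t u j hj i i' k l hk hl

lemma rho_mnr (t : Fin r) (i j : Fin m) (k l : Fin n) (hk : inPart ν t (k : ℕ))
    (hl : inPart ν t (l : ℕ)) : rho ν t (mnr K i j k l) = mnr K i j k l := by
  rw [mnr, map_sub, map_mul, map_mul,
    rho_X_in ν t (i, k) hk, rho_X_in ν t (j, l) hl,
    rho_X_in ν t (i, l) hl, rho_X_in ν t (j, k) hk]

lemma rho_Qid (t : Fin r) (q : MvPolynomial (Fin m × Fin n) K) (hq : q ∈ Qid ν t) :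
    rho ν t q ∈ Qid ν t ∧ q - rho ν t q ∈ Aideal K m r n ν t * Qid ν t := by
  induction hq using Submodule.span_induction with
  | mem x hx =>
    obtain ⟨i, j, k, l, hij, hkl, hk, hl, rfl⟩ := hx
    rw [rho_mnr ν t i j k l hk hl]
    exact ⟨Ideal.subset_span ⟨i, j, k, l, hij, hkl, hk, hl, rfl⟩,
      by rw [sub_self]; exact zero_mem _⟩
  | zero => rw [map_zero]; exact ⟨zero_mem _, by rw [sub_zero]; exact zero_mem _⟩
  | add x y hx hy ihx ihy =>
    rw [map_add]
    refine ⟨add_mem ihx.1 ihy.1, ?_⟩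
    have : x + y - (rho ν t x + rho ν t y) = (x - rho ν t x) + (y - rho ν t y) := by ring
    rw [this]; exact add_mem ihx.2 ihy.2
  | smul c x hx ih =>
    rw [smul_eq_mul, map_mul]
    refine ⟨Ideal.mul_mem_left _ _ ih.1, ?_⟩
    have : c * x - rho ν t c * rho ν t x
        = c * (x - rho ν t x) + (c - rho ν t c) * rho ν t x := by ring
    rw [this]
    exact add_mem (Ideal.mul_mem_left _ _ ih.2)
      (Ideal.mul_mem_mul (sub_rho_mem ν t c) ih.1)

lemma Qid_inter_le (t : Fin r) (q : MvPolynomial (Fin m × Fin n) K)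
    (hq : q ∈ Qid ν t) (hqA : q ∈ Aideal K m r n ν t) : q ∈ Jpartite K m r n ν := by
  have hker : rho ν t q = 0 := by
    rw [Aideal_eq_ker] at hqA
    simpa using hqA
  have h2 := (rho_Qid ν t q hq).2
  rw [hker, sub_zero] at h2
  exact AQ_le_partite ν t h2

lemma Qid_eq_bot (t : Fin r) (h1 : ν t = 1) : Qid ν t (K := K) (m := m) (n := n) = ⊥ := by
  rw [Qid]
  convert Ideal.span_empty
  rw [Set.eq_empty_iff_forall_notMem]
  rintro p ⟨i, j, k, l, hij, hkl, hk, hl, rfl⟩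
  rw [inPart, h1] at hk hl
  have : (k : ℕ) = (l : ℕ) := by omega
  exact absurd (Fin.ext this) (ne_of_lt hkl)

lemma Qid_le_A {t w : Fin r} (h : t ≠ w) : Qid ν t ≤ Aideal K m r n ν w := by
  rw [Qid, Ideal.span_le]
  rintro p ⟨i, j, k, l, hij, hkl, hk, hl, rfl⟩
  have hknw : ¬ inPart ν w (k : ℕ) := fun hc => parts_disjoint ν h (k : ℕ) ⟨hk, hc⟩
  rw [mnr]
  exact sub_mem (Ideal.mul_mem_right _ _ (X_mem_Aideal ν w (i, k) hknw))
    (Ideal.mul_mem_left _ _ (X_mem_Aideal ν w (j, k) hknw))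

lemma Jpartite_le_complete : Jpartite K m r n ν ≤ Jcomplete K m n := by
  apply Ideal.span_mono
  rintro p ⟨i, j, k, l, hij, hkl, _, rfl⟩
  exact ⟨i, j, k, l, hij, hkl, rfl⟩

lemma Jpartite_le_A (t : Fin r) : Jpartite K m r n ν ≤ Aideal K m r n ν t := by
  rw [Jpartite, Ideal.span_le]
  rintro p ⟨i, j, k, l, hij, hkl, hcp, rfl⟩
  by_cases hk : inPart ν t (k : ℕ)
  · have hl : ¬ inPart ν t (l : ℕ) := fun hc => hcp t ⟨hk, hc⟩
    exact sub_mem (Ideal.mul_mem_left _ _ (X_mem_Aideal ν t (j, l) hl))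
      (Ideal.mul_mem_right _ _ (X_mem_Aideal ν t (i, l) hl))
  · exact sub_mem (Ideal.mul_mem_right _ _ (X_mem_Aideal ν t (i, k) hk))
      (Ideal.mul_mem_left _ _ (X_mem_Aideal ν t (j, k) hk))

/-- every element of `Jcomplete` splits as an element of `Jpartite` plus elements of the
`Q_t`. -/
lemma decomp (f : MvPolynomial (Fin m × Fin n) K) (hf : f ∈ Jcomplete K m n) :
    ∃ g, g ∈ Jpartite K m r n ν ∧ ∃ q : Fin r → MvPolynomial (Fin m × Fin n) K,
      (∀ t, q t ∈ Qid ν t) ∧ f = g + ∑ t, q t := by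
  induction hf using Submodule.span_induction with
  | mem x hx =>
    obtain ⟨i, j, k, l, hij, hkl, rfl⟩ := hx
    by_cases hcp : crossPair ν (k : ℕ) (l : ℕ)
    · exact ⟨_, Ideal.subset_span ⟨i, j, k, l, hij, hkl, hcp, rfl⟩, 0,
        fun t => zero_mem _, by simp⟩
    · rw [crossPair] at hcp
      push_neg at hcp
      obtain ⟨t, hk, hl⟩ := hcp
      refine ⟨0, zero_mem _, Pi.single t (X (i, k) * X (j, l) - X (i, l) * X (j, k)),
        fun t' => ?_, ?_⟩
      · rcases eq_or_ne t' t with rfl | hne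
        · rw [Pi.single_eq_same]
          exact Ideal.subset_span ⟨i, j, k, l, hij, hkl, hk, hl, rfl⟩
        · rw [Pi.single_eq_of_ne hne]; exact zero_mem _
      · rw [Finset.sum_pi_single', if_pos (Finset.mem_univ t), zero_add]
  | zero => exact ⟨0, zero_mem _, 0, fun t => zero_mem _, by simp⟩
  | add x y hx hy ihx ihy =>
    obtain ⟨g1, hg1, q1, hq1, rfl⟩ := ihx
    obtain ⟨g2, hg2, q2, hq2, rfl⟩ := ihy
    exact ⟨g1 + g2, add_mem hg1 hg2, q1 + q2, fun t => add_mem (hq1 t) (hq2 t), by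
      simp only [Pi.add_apply, Finset.sum_add_distrib]; ring⟩
  | smul c x hx ih =>
    obtain ⟨g, hg, q, hq, rfl⟩ := ih
    refine ⟨c * g, Ideal.mul_mem_left _ _ hg, fun t => c * q t,
      fun t => Ideal.mul_mem_left _ _ (hq t), ?_⟩
    rw [smul_eq_mul, mul_add, Finset.mul_sum]

end Partite

end Stmt0Aux

/-- Under the setting, `J_{K_m,G} = J_{K_m,G̃} ∩ A_s ∩ A_{s+1} ∩ ⋯ ∩ A_r`,
and all the ideals appearing on the right are prime, so this is the minimal primary
decomposition of `J_{K_m,G}`. -/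
theorem stmt0 (K : Type) [Field K] (m r : ℕ) (hm : 2 ≤ m) (hr : 2 ≤ r)
    (ν : Fin r → ℕ) (s : Fin r) (hmono : Monotone ν)
    (hone : ∀ i : Fin r, i < s → ν i = 1) (hs : 2 ≤ ν s)
    (n : ℕ) (hn : n = ∑ i, ν i) :
    Jpartite K m r n ν = Jcomplete K m n ⊓ (⨅ k ∈ Finset.Ici s, Aideal K m r n ν k) ∧
    (Jcomplete K m n).IsPrime ∧ ∀ k ∈ Finset.Ici s, (Aideal K m r n ν k).IsPrime := by

  classical
  refine ⟨?_, Stmt0Aux.Jcomplete_isPrime K, fun k _ => Stmt0Aux.Aideal_isPrime ν k⟩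
  apply le_antisymm
  · exact le_inf (Stmt0Aux.Jpartite_le_complete ν)
      (le_iInf fun k => le_iInf fun _ => Stmt0Aux.Jpartite_le_A ν k)
  · intro f hf
    obtain ⟨hfC, hfA⟩ := Submodule.mem_inf.1 hf
    have hA : ∀ u : Fin r, s ≤ u → f ∈ Aideal K m r n ν u := by
      intro u hu
      exact (Submodule.mem_iInf _).1 ((Submodule.mem_iInf _).1 hfA u) (Finset.mem_Ici.2 hu)
    obtain ⟨g, hg, q, hq, hfeq⟩ := Stmt0Aux.decomp ν f hfC
    have hqJ : ∀ t : Fin r, q t ∈ Jpartite K m r n ν := by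
      intro t
      by_cases hts : s ≤ t
      · have hqA : q t ∈ Aideal K m r n ν t := by
          have hf2 : q t = f - g - ∑ t' ∈ Finset.univ.erase t, q t' := by
            rw [hfeq, ← Finset.sum_erase_add Finset.univ q (Finset.mem_univ t)]
            ring
          rw [hf2]
          exact sub_mem (sub_mem (hA t hts) (Stmt0Aux.Jpartite_le_A ν t hg))
            (Submodule.sum_mem _ fun w hw =>
              Stmt0Aux.Qid_le_A ν (Finset.ne_of_mem_erase hw) (hq w))
        exact Stmt0Aux.Qid_inter_le ν t (q t) (hq t) hqA
      · have ht1 : ν t = 1 := hone t (lt_of_not_ge hts)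
        have hqt := hq t
        rw [Stmt0Aux.Qid_eq_bot ν t ht1] at hqt
        rw [(Submodule.mem_bot _).1 hqt]
        exact zero_mem _
    rw [hfeq]
    exact add_mem hg (Submodule.sum_mem _ fun t _ => hqJ t)
end

section
/- Under the stated setting, the collection of subsets of [n] with the cut point property for the complete r-partite graph G is exactly C(G) = {∅, T_s, T_{s+1}, …, T_r}, where T_i = ⋃_{j≠i} V_j. -/
/-- The complete multipartite graph `K_{n_1,…,n_r}` on `Fin n`, `n = Σ ν i`:
two vertices are adjacent iff they lie in different parts. -/
def partiteGraph (r n : ℕ) (ν : Fin r → ℕ) : SimpleGraph (Fin n) where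
  Adj u v := u ≠ v ∧ crossPair ν u v
  symm := by
    constructor
    rintro u v ⟨h1, h2⟩
    exact ⟨h1.symm, fun k hk => h2 k ⟨hk.2, hk.1⟩⟩
  loopless := ⟨fun u h => h.1 rfl⟩

/-- The number of connected components `c(G|_A)` of the subgraph of `G` induced on `A`. -/
noncomputable def numComponents {V : Type} (G : SimpleGraph V) (A : Set V) : ℕ :=
  Nat.card (G.induce A).ConnectedComponent

/-- A subset `T` of the vertices of `G` has the cut point property if every `v ∈ T`
is a cut point of the induced subgraph `G \ (T \ {v})`, i.e.
`c(G \ (T \ {v})) < c((G \ (T \ {v})) \ v) = c(G \ T)`. -/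
def HasCutPointProperty {V : Type} (G : SimpleGraph V) (T : Set V) : Prop :=
  ∀ v ∈ T, numComponents G (T \ {v})ᶜ < numComponents G Tᶜ

section aux

variable {r : ℕ} {ν : Fin r → ℕ}

lemma sum_Iic_eq (k : Fin r) : ∑ i ∈ Finset.Iic k, ν i = partStart ν k + ν k := by
  rw [partStart, ← Finset.Iio_insert, Finset.sum_insert (by simp), add_comm]

lemma partStart_add_le (k : Fin r) : partStart ν k + ν k ≤ ∑ i, ν i := by
  rw [← sum_Iic_eq]
  exact Finset.sum_le_sum_of_subset (Finset.subset_univ _)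

lemma partStart_lt {k k' : Fin r} (h : k < k') : partStart ν k + ν k ≤ partStart ν k' := by
  rw [← sum_Iic_eq, partStart]
  exact Finset.sum_le_sum_of_subset (fun i hi => by
    simp only [Finset.mem_Iic] at hi
    simp only [Finset.mem_Iio]
    exact lt_of_le_of_lt hi h)

lemma inPart_unique {k k' : Fin r} {j : ℕ} (h : inPart ν k j) (h' : inPart ν k' j) : k = k' := by
  rcases lt_trichotomy k k' with hlt | he | hlt
  · have := partStart_lt (ν := ν) hlt
    obtain ⟨h1, h2⟩ := h; obtain ⟨h3, h4⟩ := h'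
    omega
  · exact he
  · have := partStart_lt (ν := ν) hlt
    obtain ⟨h1, h2⟩ := h; obtain ⟨h3, h4⟩ := h'
    omega

lemma exists_inPart (hr : 0 < r) {j : ℕ} (hj : j < ∑ i, ν i) : ∃ k, inPart ν k j := by
  classical
  set S : Finset (Fin r) := Finset.univ.filter (fun k => partStart ν k ≤ j) with hS
  have hz : (⟨0, hr⟩ : Fin r) ∈ S := by
    simp only [hS, Finset.mem_filter, Finset.mem_univ, true_and]
    have : partStart ν ⟨0, hr⟩ = 0 := by
      apply Finset.sum_eq_zero
      intro i hi
      simp only [Finset.mem_Iio, Fin.lt_def] at hi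
      omega
    omega
  have hne : S.Nonempty := ⟨_, hz⟩
  set k := S.max' hne with hk
  have hkS : k ∈ S := S.max'_mem hne
  have hkle : partStart ν k ≤ j := by
    simpa only [hS, Finset.mem_filter, Finset.mem_univ, true_and] using hkS
  refine ⟨k, hkle, ?_⟩
  by_contra hge
  push_neg at hge
  by_cases hlast : k.val + 1 < r
  · set k' : Fin r := ⟨k.val + 1, hlast⟩ with hk'
    have hIio : Finset.Iio k' = Finset.Iic k := by
      ext i
      simp only [Finset.mem_Iio, Finset.mem_Iic, Fin.lt_def, Fin.le_def, hk']
      omega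
    have hps : partStart ν k' = partStart ν k + ν k := by
      rw [partStart, hIio, sum_Iic_eq]
    have hk'S : k' ∈ S := by
      simp only [hS, Finset.mem_filter, Finset.mem_univ, true_and, hps]
      omega
    have := S.le_max' k' hk'S
    rw [← hk] at this
    have : k'.val ≤ k.val := this
    simp [hk'] at this
  · have huniv : Finset.Iic k = Finset.univ := by
      ext i
      simp only [Finset.mem_Iic, Finset.mem_univ, Fin.le_def, iff_true]
      omega
    have : (∑ i, ν i) = partStart ν k + ν k := by rw [← sum_Iic_eq, huniv]
    omega

end aux

section graph

variable {r n : ℕ} {ν : Fin r → ℕ}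

lemma adj_of_parts {u v : Fin n} {ku kv : Fin r} (hu : inPart ν ku (u : ℕ))
    (hv : inPart ν kv (v : ℕ)) (hne : ku ≠ kv) : (partiteGraph r n ν).Adj u v := by
  show u ≠ v ∧ crossPair ν (u : ℕ) (v : ℕ)
  refine ⟨?_, fun k hk => hne ?_⟩
  · intro h
    subst h
    exact hne (inPart_unique hu hv)
  · rw [← inPart_unique hk.1 hu, ← inPart_unique hk.2 hv]

lemma numComp_of_connected {V : Type} {G : SimpleGraph V} {A : Set V}
    (h : (G.induce A).Connected) : numComponents G A = 1 := by
  rw [numComponents, Nat.card_eq_one_iff_unique]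
  exact ⟨h.preconnected.subsingleton_connectedComponent,
    h.nonempty.map (G.induce A).connectedComponentMk⟩

lemma numComp_of_edgeless {V : Type} {G : SimpleGraph V} {A : Set V}
    (h : ∀ x y : A, ¬ (G.induce A).Adj x y) : numComponents G A = Nat.card A := by
  have hbot : G.induce A = ⊥ := by
    ext x y
    simp only [SimpleGraph.bot_adj, iff_false]
    exact h x y
  rw [numComponents, hbot]
  refine (Nat.card_eq_of_bijective (⊥ : SimpleGraph A).connectedComponentMk
    ⟨fun a b hab => ?_, fun c => c.exists_rep⟩).symm
  exact SimpleGraph.reachable_bot.mp ((SimpleGraph.ConnectedComponent.eq).mp hab)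

lemma induce_connected (hr : 0 < r) (hn : n = ∑ i, ν i) (A : Set (Fin n)) {u w : Fin n}
    {ku kw : Fin r} (hu : u ∈ A) (hw : w ∈ A) (hku : inPart ν ku (u : ℕ))
    (hkw : inPart ν kw (w : ℕ)) (hne : ku ≠ kw) :
    ((partiteGraph r n ν).induce A).Connected := by
  have hpart : ∀ x : Fin n, ∃ k, inPart ν k (x : ℕ) := fun x =>
    exists_inPart hr (by rw [← hn]; exact x.isLt)
  rw [SimpleGraph.connected_iff]
  refine ⟨?_, ⟨⟨u, hu⟩⟩⟩
  rintro ⟨x, hx⟩ ⟨y, hy⟩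
  obtain ⟨kx, hkx⟩ := hpart x
  obtain ⟨ky, hky⟩ := hpart y
  by_cases hxy : kx = ky
  · subst hxy
    -- pick a vertex in a different part
    obtain ⟨z, hz, kz, hkz, hzx⟩ : ∃ z ∈ A, ∃ kz, inPart ν kz (z : ℕ) ∧ kz ≠ kx := by
      by_cases h : ku = kx
      · exact ⟨w, hw, kw, hkw, by rw [← h]; exact fun e => hne e.symm⟩
      · exact ⟨u, hu, ku, hku, h⟩
    have h1 : ((partiteGraph r n ν).induce A).Adj ⟨x, hx⟩ ⟨z, hz⟩ :=
      adj_of_parts hkx hkz (fun e => hzx e.symm)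
    have h2 : ((partiteGraph r n ν).induce A).Adj ⟨z, hz⟩ ⟨y, hy⟩ :=
      adj_of_parts hkz hky hzx
    exact h1.reachable.trans h2.reachable
  · have h1 : ((partiteGraph r n ν).induce A).Adj ⟨x, hx⟩ ⟨y, hy⟩ :=
      adj_of_parts hkx hky hxy
    exact h1.reachable

lemma edgeless_of_subset_part {A : Set (Fin n)} {k : Fin r}
    (hA : ∀ x ∈ A, inPart ν k (x : ℕ)) :
    ∀ x y : A, ¬ ((partiteGraph r n ν).induce A).Adj x y := by
  rintro ⟨x, hx⟩ ⟨y, hy⟩ (⟨-, hcross⟩ : _ ∧ crossPair ν (x : ℕ) (y : ℕ))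
  exact hcross k ⟨hA x hx, hA y hy⟩

end graph


/-- For the complete `r`-partite graph `G = K_{n_1,…,n_r}` as in the
setting, `C(G) = {∅, T_s, T_{s+1}, …, T_r}`, where `T_k = ⋃_{i ≠ k} V_i` is the
complement of the `k`-th part `V_k`. -/
theorem stmt2 (r : ℕ) (hr : 2 ≤ r)
    (ν : Fin r → ℕ) (s : Fin r) (hmono : Monotone ν)
    (hone : ∀ i : Fin r, i < s → ν i = 1) (hs : 2 ≤ ν s)
    (n : ℕ) (hn : n = ∑ i, ν i) :
    {T : Set (Fin n) | HasCutPointProperty (partiteGraph r n ν) T} =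
      insert (∅ : Set (Fin n))
        {T : Set (Fin n) | ∃ k : Fin r, s ≤ k ∧ T = {v : Fin n | ¬ inPart ν k (v : ℕ)}} := by
  have hr0 : 0 < r := by omega
  have hpart : ∀ x : Fin n, ∃ k, inPart ν k (x : ℕ) := fun x =>
    exists_inPart hr0 (by rw [← hn]; exact x.isLt)
  have hdiff : ∀ (T : Set (Fin n)) (v : Fin n), (T \ {v})ᶜ = Tᶜ ∪ {v} := by
    intro T v
    rw [Set.diff_eq, Set.compl_inter, compl_compl]
  ext T
  simp only [Set.mem_setOf_eq, Set.mem_insert_iff]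
  constructor
  · intro hT
    by_cases hTe : T = ∅
    · exact Or.inl hTe
    right
    obtain ⟨v0, hv0⟩ := Set.nonempty_iff_ne_empty.mpr hTe
    -- Tᶜ is nonempty
    have hlt0 := hT v0 hv0
    have hTc : Tᶜ.Nonempty := by
      rw [Set.nonempty_iff_ne_empty]
      intro he
      have : numComponents (partiteGraph r n ν) Tᶜ = 0 := by
        rw [numComponents, Nat.card_eq_zero]
        left
        constructor
        rintro c
        obtain ⟨⟨x, hx⟩, -⟩ := c.exists_rep
        rw [he] at hx
        exact hx
      omega
    obtain ⟨u, hu⟩ := hTc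
    obtain ⟨ku, hku⟩ := hpart u
    -- Tᶜ is contained in a single part
    have hsub : ∀ x ∈ Tᶜ, inPart ν ku (x : ℕ) := by
      by_contra hc
      push_neg at hc
      obtain ⟨w, hw, hwk⟩ := hc
      obtain ⟨kw, hkw⟩ := hpart w
      have hne : ku ≠ kw := fun e => hwk (e ▸ hkw)
      have h1 : numComponents (partiteGraph r n ν) Tᶜ = 1 :=
        numComp_of_connected (induce_connected hr0 hn _ hu hw hku hkw hne)
      have h2 : numComponents (partiteGraph r n ν) (T \ {v0})ᶜ = 1 := by
        refine numComp_of_connected (induce_connected hr0 hn _ ?_ ?_ hku hkw hne)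
        · rw [hdiff]; exact Or.inl hu
        · rw [hdiff]; exact Or.inl hw
      omega
    -- every element of T lies outside part ku
    have hTout : ∀ v ∈ T, ¬ inPart ν ku (v : ℕ) := by
      intro v hv hvk
      have hlt := hT v hv
      have hvTc : v ∉ Tᶜ := fun h => h hv
      have e1 : numComponents (partiteGraph r n ν) Tᶜ = Tᶜ.ncard := by
        rw [numComp_of_edgeless (edgeless_of_subset_part hsub), Nat.card_coe_set_eq]
      have e2 : numComponents (partiteGraph r n ν) (T \ {v})ᶜ = Tᶜ.ncard + 1 := by
        rw [hdiff]
        have hins : Tᶜ ∪ {v} = insert v Tᶜ := by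
          rw [Set.union_comm]; rfl
        rw [numComp_of_edgeless (A := Tᶜ ∪ {v}) (edgeless_of_subset_part (k := ku) ?_),
          Nat.card_coe_set_eq, hins, Set.ncard_insert_of_notMem hvTc]
        rintro x (hx | hx)
        · exact hsub x hx
        · rw [Set.mem_singleton_iff] at hx
          exact hx ▸ hvk
      omega
    refine ⟨ku, ?_, ?_⟩
    · -- s ≤ ku : show ν ku ≥ 2
      by_contra hks
      push_neg at hks
      have hnu1 : ν ku = 1 := hone ku hks
      -- numComponents Tᶜ ≥ 2
      have e1 : numComponents (partiteGraph r n ν) Tᶜ = Tᶜ.ncard := by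
        rw [numComp_of_edgeless (edgeless_of_subset_part hsub), Nat.card_coe_set_eq]
      have hpos : 1 ≤ numComponents (partiteGraph r n ν) (T \ {v0})ᶜ := by
        rw [numComponents]
        have : v0 ∈ (T \ {v0})ᶜ := by rw [hdiff]; exact Or.inr rfl
        have : Nonempty ((partiteGraph r n ν).induce (T \ {v0})ᶜ).ConnectedComponent :=
          ⟨((partiteGraph r n ν).induce _).connectedComponentMk ⟨v0, this⟩⟩
        exact Nat.one_le_iff_ne_zero.mpr (Nat.card_ne_zero.mpr ⟨this, inferInstance⟩)
      have h2 : 2 ≤ Tᶜ.ncard := by omega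
      obtain ⟨a, b, ha, hb, hab⟩ := (Set.one_lt_ncard_iff (Set.toFinite _)).mp h2
      have hpa := hsub a ha
      have hpb := hsub b hb
      have : (a : ℕ) ≠ (b : ℕ) := fun e => hab (Fin.ext e)
      obtain ⟨_, _⟩ := hpa
      obtain ⟨_, _⟩ := hpb
      omega
    · -- T = complement of part ku
      ext x
      simp only [Set.mem_setOf_eq]
      constructor
      · exact fun hx => hTout x hx
      · intro hx
        by_contra hxT
        exact hx (hsub x hxT)
  · rintro (rfl | ⟨k, hsk, rfl⟩)
    · intro v hv
      exact absurd hv (Set.notMem_empty v)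
    · intro v hv
      simp only [Set.mem_setOf_eq] at hv
      obtain ⟨kv, hkv⟩ := hpart v
      have hkkv : k ≠ kv := fun e => hv (e ▸ hkv)
      have hTc : {v : Fin n | ¬ inPart ν k (v : ℕ)}ᶜ = {v : Fin n | inPart ν k (v : ℕ)} := by
        ext x; simp [Set.mem_compl_iff]
      have hnuk : 2 ≤ ν k := le_trans hs (hmono hsk)
      have hlen : partStart ν k + ν k ≤ n := hn ▸ partStart_add_le k
      -- two vertices in part k
      set u1 : Fin n := ⟨partStart ν k, by omega⟩ with hu1
      set u2 : Fin n := ⟨partStart ν k + 1, by omega⟩ with hu2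
      have hu1p : inPart ν k (u1 : ℕ) := ⟨le_refl _, by simp [hu1]; omega⟩
      have hu2p : inPart ν k (u2 : ℕ) := ⟨by simp [hu2], by simp [hu2]; omega⟩
      have e1 : numComponents (partiteGraph r n ν) {v : Fin n | ¬ inPart ν k (v : ℕ)}ᶜ
          = {x : Fin n | inPart ν k (x : ℕ)}.ncard := by
        have := numComp_of_edgeless (G := partiteGraph r n ν)
          (A := {x : Fin n | inPart ν k (x : ℕ)})
          (edgeless_of_subset_part (fun x hx => hx))
        rw [hTc, this, Nat.card_coe_set_eq]
      have e2 : numComponents (partiteGraph r n ν)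
          ({v : Fin n | ¬ inPart ν k (v : ℕ)} \ {v})ᶜ = 1 := by
        rw [hdiff, hTc]
        exact numComp_of_connected (induce_connected hr0 hn _ (Or.inl hu1p) (Or.inr rfl)
          hu1p hkv hkkv)
      rw [e1, e2]
      refine (Set.one_lt_ncard_iff (Set.toFinite _)).mpr ⟨u1, u2, hu1p, hu2p, ?_⟩
      intro e
      rw [hu1, hu2] at e
      have := Fin.mk.injEq (partStart ν k) _ (partStart ν k + 1) _ ▸ e
      simp [Fin.ext_iff, hu1, hu2] at e
end
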